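/- With the Friedrichs construction above, the operator F = T⁻¹ is self-adjoint on H, has domain contained in D, and satisfies Q(φ,ψ) = ⟨Fφ, ψ⟩ for all φ ∈ Dom(F) and ψ ∈ D; moreover F ≥ 1 (i.e., ⟨Fφ,φ⟩ ≥ ‖φ‖²). -/

import Mathlib

open scoped ComplexOrder

/-- The Friedrichs extension: with `T = J ∘ T₀ : H → H` the bounded injective self-adjoint
operator of the Friedrichs construction (`Q(T₀α, ψ)_D = ⟨α, Jψ⟩_H`), the operator
`F = T⁻¹`, with domain `im T`, is self-adjoint, has domain contained in `D` (the range of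
`J`), satisfies `Q(φ,ψ) = ⟨Fφ, ψ⟩` for `φ ∈ Dom F`, `ψ ∈ D`, and `F ≥ 1`. -/
theorem stmt_7 {H D : Type*} [NormedAddCommGroup H] [InnerProductSpace ℂ H] [CompleteSpace H]
    [NormedAddCommGroup D] [InnerProductSpace ℂ D] [CompleteSpace D]
    (J : D →L[ℂ] H) (hJinj : Function.Injective J) (hJdense : DenseRange J)
    (hcoercive : ∀ φ : D, ‖J φ‖ ≤ ‖φ‖)
    (T₀ : H →L[ℂ] D)
    (hT₀ : ∀ (α : H) (ψ : D), (inner ℂ (T₀ α) ψ : ℂ) = inner ℂ α (J ψ))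
    (hTinj : Function.Injective (J.comp T₀)) :
    ∃ F : H →ₗ.[ℂ] H,
      -- `Dom F = im T ⊆ im J = D`
      F.domain = LinearMap.range (J.comp T₀ : H →ₗ[ℂ] H) ∧
      -- `F = T⁻¹`
      (∀ (α : H) (h : J (T₀ α) ∈ F.domain), F ⟨J (T₀ α), h⟩ = α) ∧
      -- `F` is self-adjoint
      IsSelfAdjoint F ∧
      -- `Q(φ, ψ) = ⟨Fφ, ψ⟩` for all `φ ∈ Dom F`, `ψ ∈ D`
      (∀ (x : F.domain) (ψ : D), (inner ℂ (T₀ (F x)) ψ : ℂ) = inner ℂ (F x) (J ψ)) ∧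
      -- `F ≥ 1`: `⟨Fφ, φ⟩ ≥ ‖φ‖²`
      (∀ x : F.domain, ‖(x : H)‖ ^ 2 ≤ (inner ℂ (F x) (x : H) : ℂ).re) := by
  classical
  set T : H →L[ℂ] H := J.comp T₀ with hTdef
  have hTapp : ∀ α : H, T α = J (T₀ α) := fun α => rfl
  have hTinj' : Function.Injective (T : H →ₗ[ℂ] H) := hTinj
  -- `⟪β, Tα⟫ = Q(T₀β, T₀α)`
  have hsym : ∀ α β : H, (inner ℂ β (T α) : ℂ) = inner ℂ (T₀ β) (T₀ α) :=
    fun α β => (hT₀ β (T₀ α)).symm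
  -- `T` is symmetric
  have hsa : ∀ α β : H, (inner ℂ (T α) β : ℂ) = inner ℂ α (T β) := by
    intro α β
    calc (inner ℂ (T α) β : ℂ) = starRingEnd ℂ (inner ℂ β (T α)) := (inner_conj_symm _ _).symm
      _ = starRingEnd ℂ (inner ℂ (T₀ β) (T₀ α) : ℂ) := by rw [hsym]
      _ = inner ℂ (T₀ α) (T₀ β) := inner_conj_symm _ _
      _ = inner ℂ α (T β) := hT₀ α (T₀ β)
  -- the inverse of `T` as an equivalence onto the range
  let e : H ≃ₗ[ℂ] LinearMap.range (T : H →ₗ[ℂ] H) :=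
    LinearEquiv.ofInjective (T : H →ₗ[ℂ] H) hTinj'
  set F : H →ₗ.[ℂ] H :=
    { domain := LinearMap.range (T : H →ₗ[ℂ] H)
      toFun := e.symm.toLinearMap } with hFdef
  have hdom : F.domain = LinearMap.range (J.comp T₀ : H →ₗ[ℂ] H) := by
    ext x
    exact Iff.rfl
  have hApply : ∀ (α : H) (h : T α ∈ F.domain), F ⟨T α, h⟩ = α := by
    intro α h
    show e.symm ⟨T α, h⟩ = α
    rw [LinearEquiv.symm_apply_eq]
    exact Subtype.ext (LinearEquiv.ofInjective_apply (T : H →ₗ[ℂ] H) α).symm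
  have hTF : ∀ x : F.domain, T (F x) = (x : H) := by
    intro x
    have : ((e (e.symm x)) : H) = (x : H) := by rw [LinearEquiv.apply_symm_apply]
    rw [← this]
    exact (LinearEquiv.ofInjective_apply (T : H →ₗ[ℂ] H) (e.symm x)).symm
  -- dense domain
  have hdense : Dense (F.domain : Set H) := by
    rw [Submodule.dense_iff_topologicalClosure_eq_top,
      Submodule.topologicalClosure_eq_top_iff]
    rw [Submodule.eq_bot_iff]
    intro β hβ
    have h1 : (inner ℂ (T β) β : ℂ) = 0 :=
      (Submodule.mem_orthogonal _ β).1 hβ (T β) ⟨β, rfl⟩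
    have h2 : (inner ℂ β (T β) : ℂ) = 0 := by
      rw [← inner_conj_symm, h1, map_zero]
    have h3 : T₀ β = 0 := by
      have h := hsym β β
      rw [h2] at h
      exact inner_self_eq_zero.mp h.symm
    have h4 : ∀ ψ : D, (inner ℂ β (J ψ) : ℂ) = 0 := by
      intro ψ
      rw [← hT₀ β ψ, h3, inner_zero_left]
    have hdJ : Dense ((LinearMap.range (J : D →ₗ[ℂ] H) : Submodule ℂ H) : Set H) := by
      rwa [LinearMap.coe_range]
    have h5 : β = 0 := by
      refine hdJ.eq_zero_of_inner_left (𝕜 := ℂ) fun v hv => ?_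
      obtain ⟨ψ, hψ⟩ := hv
      rw [← hψ]
      exact h4 ψ
    simp [h5]
  -- `F` is symmetric
  have hFsym : F.IsFormalAdjoint F := by
    intro x y
    calc (inner ℂ (F x) (y : H) : ℂ) = inner ℂ (F x) (T (F y)) := by rw [hTF]
      _ = inner ℂ (T (F x)) (F y) := (hsa (F x) (F y)).symm
      _ = inner ℂ (x : H) (F y) := by rw [hTF]
  have hle : F ≤ F.adjoint := LinearPMap.IsFormalAdjoint.le_adjoint hdense hFsym
  have hda : F.adjoint.IsFormalAdjoint F := LinearPMap.adjoint_isFormalAdjoint hdense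
  have hdomle : F.adjoint.domain ≤ F.domain := by
    intro y hy
    set z := F.adjoint ⟨y, hy⟩ with hz
    have hz' : ∀ α : H, (inner ℂ (T z) α : ℂ) = inner ℂ y α := by
      intro α
      have hmem : T α ∈ F.domain := ⟨α, rfl⟩
      have h := hda ⟨y, hy⟩ ⟨T α, hmem⟩
      rw [hApply α hmem] at h
      calc (inner ℂ (T z) α : ℂ) = inner ℂ z (T α) := hsa z α
        _ = inner ℂ y α := h
    have hTz : T z = y := ext_inner_right ℂ hz'
    exact ⟨z, hTz⟩
  have hFsa : IsSelfAdjoint F := by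
    rw [LinearPMap.isSelfAdjoint_def]
    exact (LinearPMap.eq_of_le_of_domain_eq hle
      (le_antisymm hle.1 hdomle)).symm
  refine ⟨F, hdom, fun α h => hApply α h, hFsa, fun x ψ => hT₀ (F x) ψ, fun x => ?_⟩
  -- `F ≥ 1`
  have h1 : (inner ℂ (F x) (x : H) : ℂ) = inner ℂ (T₀ (F x)) (T₀ (F x)) := by
    rw [← hTF x]
    exact hsym (F x) (F x)
  have h2 : (inner ℂ (F x) (x : H) : ℂ).re = ‖T₀ (F x)‖ ^ 2 := by
    rw [h1, ← inner_self_eq_norm_sq (𝕜 := ℂ)]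
    rfl
  have h3 : ‖(x : H)‖ ≤ ‖T₀ (F x)‖ := by
    rw [← hTF x, hTapp]
    exact hcoercive _
  rw [h2]
  have := sq_le_sq' (by linarith [norm_nonneg (x : H), norm_nonneg (T₀ (F x))]) h3
  simpa using this
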